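/- Let ψ : (0,∞) → ℝ be convex with an affine minorant, and suppose â_ψ := liminf_{x→∞} ψ(x)/x < +∞. If the (monotone) limit lim_{x→∞}(ψ(x) - ψ'(x⁻)·x) > -∞, then liminf_{x→∞}(ψ(x) - â_ψ·x) > -∞, i.e. ψ ∈ Φ₃. -/

import Mathlib

open Filter Set Topology

/-- `φ` admits an affine minorant on `(0,∞)`. -/
def AffBdd (φ : ℝ → ℝ) : Prop := ∃ a b : ℝ, ∀ x > 0, a * x + b ≤ φ x

/-- The biconjugate of `φ` on `(0,∞)`: the pointwise supremum of all affine
minorants of `φ` on `(0,∞)`, i.e. the largest convex minorant of `φ`. -/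
noncomputable def biconj (φ : ℝ → ℝ) (x : ℝ) : ℝ :=
  sSup {y : ℝ | ∃ a b : ℝ, (∀ t > 0, a * t + b ≤ φ t) ∧ y = a * x + b}

/-- Left derivative of a convex function at `x ∈ (0,∞)`: the supremum of
slopes `(ψ x - ψ t)/(x - t)` over `t ∈ (0, x)`. -/
noncomputable def leftD (ψ : ℝ → ℝ) (x : ℝ) : ℝ :=
  sSup ((fun t => (ψ x - ψ t) / (x - t)) '' Set.Ioo 0 x)

private lemma leftD_bddAbove {ψ : ℝ → ℝ} (hconv : ConvexOn ℝ (Set.Ioi (0:ℝ)) ψ)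
    {x : ℝ} (hx : 0 < x) :
    BddAbove ((fun t => (ψ x - ψ t) / (x - t)) '' Set.Ioo 0 x) := by
  refine ⟨(ψ (x+1) - ψ x) / ((x+1) - x), ?_⟩
  rintro y ⟨t, ht, rfl⟩
  have := hconv.slope_mono_adjacent (x := t) (y := x) (z := x+1)
    ht.1 (by simp; linarith) ht.2 (by linarith)
  simpa using this

private lemma slope_le_leftD {ψ : ℝ → ℝ} (hconv : ConvexOn ℝ (Set.Ioi (0:ℝ)) ψ)
    {t x : ℝ} (ht : 0 < t) (htx : t < x) :
    (ψ x - ψ t) / (x - t) ≤ leftD ψ x :=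
  le_csSup (leftD_bddAbove hconv (ht.trans htx)) ⟨t, ⟨ht, htx⟩, rfl⟩

theorem stmt_8 (ψ : ℝ → ℝ) (hconv : ConvexOn ℝ (Set.Ioi (0:ℝ)) ψ) (hψ : AffBdd ψ)
    (a : ℝ)
    (ha : Filter.liminf (fun x => ((ψ x / x : ℝ) : EReal)) atTop = (a : EReal))
    (hlim : ⊥ < Filter.liminf (fun x => ((ψ x - leftD ψ x * x : ℝ) : EReal)) atTop) :
    ⊥ < Filter.liminf (fun x => ((ψ x - a * x : ℝ) : EReal)) atTop := by
  -- extract a real lower bound c that holds eventually for ψ x - leftD ψ x * x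
  obtain ⟨c, hc1, hc2⟩ := EReal.exists_between_coe_real hlim
  have hcev : ∀ᶠ x in atTop, c < ψ x - leftD ψ x * x := by
    have := Filter.eventually_lt_of_lt_liminf hc2
    filter_upwards [this] with x hx
    exact_mod_cast hx
  -- key pointwise bound: ψ t - a * t ≥ c for all t > 0
  have key : ∀ t : ℝ, 0 < t → c ≤ ψ t - a * t := by
    intro t ht
    have : ∀ ε : ℝ, 0 < ε → a * t + c ≤ ψ t + ε := by
      intro ε hε
      set δ : ℝ := ε / (2 * t) with hδdef
      have hδ : 0 < δ := div_pos hε (by linarith)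
      -- eventually ψ x / x > a - δ
      have hev : ∀ᶠ x : ℝ in atTop, ((a - δ : ℝ) : EReal) < ((ψ x / x : ℝ) : EReal) := by
        refine Filter.eventually_lt_of_lt_liminf ?_ (by isBoundedDefault)
        rw [ha]
        exact_mod_cast (by linarith : a - δ < a)
      -- pick a suitable large x
      obtain ⟨x, hx1, hx2, hx3, hx4⟩ :
          ∃ x : ℝ, ((a - δ : ℝ) : EReal) < ((ψ x / x : ℝ) : EReal) ∧
            c < ψ x - leftD ψ x * x ∧ t < x ∧ (ψ t - (a - 2*δ) * t) / δ ≤ x := by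
        have := (hev.and (hcev.and ((eventually_gt_atTop t).and
          (eventually_ge_atTop ((ψ t - (a - 2*δ) * t) / δ))))).exists
        obtain ⟨x, h1, h2, h3, h4⟩ := this
        exact ⟨x, h1, h2, h3, h4⟩
      have hxpos : 0 < x := ht.trans hx3
      have hxψ : (a - δ) * x < ψ x := by
        have : (a - δ) < ψ x / x := by exact_mod_cast hx1
        calc (a - δ) * x < (ψ x / x) * x := by
              exact mul_lt_mul_of_pos_right this hxpos
          _ = ψ x := by field_simp
      -- slope from t to x is at least a - 2δ
      have hxt : 0 < x - t := by linarith
      have hslope : a - 2*δ ≤ (ψ x - ψ t) / (x - t) := by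
        rw [le_div_iff₀ hxt]
        have hxbig : ψ t - (a - 2*δ) * t ≤ δ * x := by
          have := (div_le_iff₀ hδ).mp hx4
          linarith [this]
        nlinarith
      have hld : a - 2*δ ≤ leftD ψ x := hslope.trans (slope_le_leftD hconv ht hx3)
      -- slope(t,x) ≤ leftD ψ x gives ψ t ≥ ψ x - leftD ψ x * (x - t)
      have hsub : ψ x - leftD ψ x * (x - t) ≤ ψ t := by
        have h1 : (ψ x - ψ t) / (x - t) ≤ leftD ψ x := slope_le_leftD hconv ht hx3
        have := (div_le_iff₀ hxt).mp h1
        linarith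
      have h2δt : 2 * δ * t = ε := by
        field_simp [hδdef]
        rw [hδdef]; field_simp
      -- combine
      have : c + leftD ψ x * t ≤ ψ t := by
        have := hx2
        nlinarith [hsub]
      nlinarith [mul_le_mul_of_nonneg_right hld ht.le]
    have := le_of_forall_pos_le_add this
    linarith
  have : ∀ᶠ t : ℝ in atTop, (c : EReal) ≤ ((ψ t - a * t : ℝ) : EReal) := by
    filter_upwards [eventually_gt_atTop 0] with t ht
    exact_mod_cast key t ht
  calc (⊥ : EReal) < (c : EReal) := bot_lt_iff_ne_bot.mpr (by simp)
    _ ≤ _ := Filter.le_liminf_of_le (by isBoundedDefault) this
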